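/- arXiv:0909.0659 — 6 statements merged into one kernel-verified Lean document; each statement's English description precedes it below -/
import Mathlib

section
/- The function H(φ,y) = φ⁴ − 2cφ³ + (c² + g)φ² − 2(cg + h)φ − y²(φ − c)² is a first integral of the planar system φ' = y, y' = [(2φ² − cφ − y² + g)(φ − c) − h]/(φ − c)², i.e., for any solution (φ(ξ), y(ξ)) with φ(ξ) ≠ c, the quantity H(φ(ξ), y(ξ)) is constant in ξ. -/
/-- `H(φ,y)` is a first integral of the singular traveling-wave system. -/
theorem stmt1 (c g h : ℝ) (φ y : ℝ → ℝ)
    (hφ : Differentiable ℝ φ) (hy : Differentiable ℝ y)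
    (hne : ∀ ξ : ℝ, φ ξ ≠ c)
    (h1 : ∀ ξ : ℝ, deriv φ ξ = y ξ)
    (h2 : ∀ ξ : ℝ, deriv y ξ =
      ((2 * (φ ξ)^2 - c * φ ξ - (y ξ)^2 + g) * (φ ξ - c) - h) / (φ ξ - c)^2) :
    ∀ ξ₁ ξ₂ : ℝ,
      (φ ξ₁)^4 - 2*c*(φ ξ₁)^3 + (c^2 + g)*(φ ξ₁)^2 - 2*(c*g + h)*(φ ξ₁)
        - (y ξ₁)^2 * (φ ξ₁ - c)^2
      = (φ ξ₂)^4 - 2*c*(φ ξ₂)^3 + (c^2 + g)*(φ ξ₂)^2 - 2*(c*g + h)*(φ ξ₂)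
        - (y ξ₂)^2 * (φ ξ₂ - c)^2 := by
  set F : ℝ → ℝ := fun t =>
    (φ t)^4 - 2*c*(φ t)^3 + (c^2 + g)*(φ t)^2 - 2*(c*g + h)*(φ t)
      - (y t)^2 * (φ t - c)^2 with hF
  have key : ∀ ξ : ℝ, HasDerivAt F 0 ξ := by
    intro ξ
    have hp : HasDerivAt φ (y ξ) ξ := by
      have := (hφ ξ).hasDerivAt
      rwa [h1] at this
    have hq : HasDerivAt y
        (((2 * (φ ξ)^2 - c * φ ξ - (y ξ)^2 + g) * (φ ξ - c) - h) / (φ ξ - c)^2) ξ := by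
      have := (hy ξ).hasDerivAt
      rwa [h2] at this
    have hd : HasDerivAt F
        ((4 * (φ ξ)^3 * y ξ) - 2*c*(3 * (φ ξ)^2 * y ξ) + (c^2+g)*(2 * (φ ξ)^1 * y ξ)
          - 2*(c*g+h)*(y ξ)
          - ((2 * (y ξ)^1 * (((2 * (φ ξ)^2 - c * φ ξ - (y ξ)^2 + g) * (φ ξ - c) - h) / (φ ξ - c)^2)) * ((φ ξ - c)^2)
             + (y ξ)^2 * (2 * (φ ξ - c)^1 * y ξ))) ξ := by
      exact ((((hp.pow 4).sub ((hp.pow 3).const_mul (2*c))).add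
        ((hp.pow 2).const_mul (c^2+g))).sub (hp.const_mul (2*(c*g+h)))).sub
        (((hq.pow 2).mul ((hp.sub_const c).pow 2)))
    convert hd using 1
    have hne' : φ ξ - c ≠ 0 := sub_ne_zero.mpr (hne ξ)
    field_simp
    ring
  have hdiff : Differentiable ℝ F := fun ξ => (key ξ).differentiableAt
  have hzero : ∀ ξ, deriv F ξ = 0 := fun ξ => (key ξ).deriv
  intro ξ₁ ξ₂
  exact is_const_of_deriv_eq_zero hdiff hzero ξ₁ ξ₂
end

section
/- The function H(φ,y) = φ⁴ − 2cφ³ + (c² + g)φ² − 2(cg + h)φ − y²(φ − c)² is a first integral of the regularized system dφ/dζ = y(φ − c)², dy/dζ = (2φ² − cφ − y² + g)(φ − c) − h, for all (φ, y) (including φ = c). -/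
/-- `H(φ,y)` is a first integral of the regularized system, for all `(φ,y)`. -/
theorem stmt2 (c g h : ℝ) (φ y : ℝ → ℝ)
    (hφ : Differentiable ℝ φ) (hy : Differentiable ℝ y)
    (h1 : ∀ ζ : ℝ, deriv φ ζ = y ζ * (φ ζ - c)^2)
    (h2 : ∀ ζ : ℝ, deriv y ζ =
      (2 * (φ ζ)^2 - c * φ ζ - (y ζ)^2 + g) * (φ ζ - c) - h) :
    ∀ ζ₁ ζ₂ : ℝ,
      (φ ζ₁)^4 - 2*c*(φ ζ₁)^3 + (c^2 + g)*(φ ζ₁)^2 - 2*(c*g + h)*(φ ζ₁)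
        - (y ζ₁)^2 * (φ ζ₁ - c)^2
      = (φ ζ₂)^4 - 2*c*(φ ζ₂)^3 + (c^2 + g)*(φ ζ₂)^2 - 2*(c*g + h)*(φ ζ₂)
        - (y ζ₂)^2 * (φ ζ₂ - c)^2 := by
  set F : ℝ → ℝ := fun ζ =>
    (φ ζ)^4 - 2*c*(φ ζ)^3 + (c^2 + g)*(φ ζ)^2 - 2*(c*g + h)*(φ ζ)
      - (y ζ)^2 * (φ ζ - c)^2 with hF
  have key : ∀ ζ : ℝ, HasDerivAt F 0 ζ := by
    intro ζ
    have hφ' : HasDerivAt φ (y ζ * (φ ζ - c)^2) ζ := by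
      rw [← h1 ζ]; exact (hφ ζ).hasDerivAt
    have hy' : HasDerivAt y ((2 * (φ ζ)^2 - c * φ ζ - (y ζ)^2 + g) * (φ ζ - c) - h) ζ := by
      rw [← h2 ζ]; exact (hy ζ).hasDerivAt
    have H := (((hφ'.pow 4).sub (((hasDerivAt_const ζ (2*c)).mul (hφ'.pow 3)))).add
        (((hasDerivAt_const ζ (c^2+g)).mul (hφ'.pow 2)))).sub
        (((hasDerivAt_const ζ (2*(c*g+h))).mul hφ')) |>.sub
        ((hy'.pow 2).mul ((hφ'.sub_const c).pow 2))
    exact H.congr_deriv (by simp only [Pi.pow_apply]; ring)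
  have hc : ∀ ζ₁ ζ₂, F ζ₁ = F ζ₂ := by
    intro ζ₁ ζ₂
    have := is_const_of_deriv_eq_zero (fun ζ => (key ζ).differentiableAt)
      (fun ζ => (key ζ).deriv) ζ₁ ζ₂
    exact this
  exact hc
end

section
/- Let c > 0, h = (3c/32)(c² − 8g), and c²/8 < g < 13c²/32. Then with φ₁₋ = (5c − √(13c² − 32g))/8, the point (φ₁₋, 0) is a center of the system dφ/dζ = y(φ − c)², dy/dζ = (2φ² − cφ − y² + g)(φ − c) − h in the sense that the Jacobian determinant J(φ₁₋, 0) = −(6φ₁₋² − 6cφ₁₋ + c² + g)(φ₁₋ − c)² is strictly positive. -/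
/-- In the regime `c²/8 < g < 13c²/32`, the point `(φ₁₋, 0)` is a linear center:
the Jacobian determinant there is strictly positive. -/
theorem stmt7 (c g : ℝ) (hc : 0 < c)
    (h : ℝ) (hh : h = (3 * c / 32) * (c^2 - 8 * g))
    (hg1 : c^2 / 8 < g) (hg2 : g < 13 * c^2 / 32) :
    0 < -(6 * ((5 * c - Real.sqrt (13 * c^2 - 32 * g)) / 8)^2
          - 6 * c * ((5 * c - Real.sqrt (13 * c^2 - 32 * g)) / 8) + c^2 + g)
        * ((5 * c - Real.sqrt (13 * c^2 - 32 * g)) / 8 - c)^2 := by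
  set s := Real.sqrt (13 * c^2 - 32 * g) with hsdef
  have hpos : 0 < 13 * c^2 - 32 * g := by linarith
  have hsq : s^2 = 13 * c^2 - 32 * g := Real.sq_sqrt hpos.le
  have hs0 : 0 < s := Real.sqrt_pos.mpr hpos
  have hs3 : s < 3 * c := by nlinarith
  nlinarith [mul_pos hs0 (sub_pos.mpr hs3), sq_nonneg (3*c + s),
    mul_pos (mul_pos hs0 (sub_pos.mpr hs3)) (pow_pos (by linarith : (0:ℝ) < 3*c + s) 2)]
end

section
/- Let c > 0, h = (3c/32)(c² − 8g), and g < c²/8. Then the points (φ₁±, 0) with φ₁± = (5c ± √(13c² − 32g))/8 are saddle points of the system dφ/dζ = y(φ − c)², dy/dζ = (2φ² − cφ − y² + g)(φ − c) − h, in the sense that J(φ₁±, 0) < 0, while (c/4, 0) is a center in the sense that J(c/4, 0) > 0. -/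
/-- For `g < c²/8`: `(φ₁±, 0)` are saddles (`J < 0`) and `(c/4, 0)` is a center (`J > 0`). -/
theorem stmt8 (c g : ℝ) (hc : 0 < c)
    (h : ℝ) (hh : h = (3 * c / 32) * (c^2 - 8 * g)) (hg : g < c^2 / 8) :
    (-(6 * ((5 * c + Real.sqrt (13 * c^2 - 32 * g)) / 8)^2
        - 6 * c * ((5 * c + Real.sqrt (13 * c^2 - 32 * g)) / 8) + c^2 + g)
      * ((5 * c + Real.sqrt (13 * c^2 - 32 * g)) / 8 - c)^2 < 0) ∧
    (-(6 * ((5 * c - Real.sqrt (13 * c^2 - 32 * g)) / 8)^2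
        - 6 * c * ((5 * c - Real.sqrt (13 * c^2 - 32 * g)) / 8) + c^2 + g)
      * ((5 * c - Real.sqrt (13 * c^2 - 32 * g)) / 8 - c)^2 < 0) ∧
    (0 < -(6 * (c / 4)^2 - 6 * c * (c / 4) + c^2 + g) * (c / 4 - c)^2) := by
  set s := Real.sqrt (13 * c^2 - 32 * g) with hs
  have hpos : (0:ℝ) ≤ 13 * c^2 - 32 * g := by nlinarith
  have hs2 : s^2 = 13 * c^2 - 32 * g := Real.sq_sqrt hpos
  have hs0 : 0 ≤ s := Real.sqrt_nonneg _
  have hs3c : 3 * c < s := by nlinarith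
  refine ⟨?_, ?_, ?_⟩ <;> nlinarith [sq_nonneg (s - 3*c), sq_nonneg (s + 3*c), mul_pos hc hc, sq_nonneg c]
end

section
/- Let c > 0 and let φ : ℝ → ℝ be a differentiable function with c/4 < φ(ξ) < 3c/4 for all ξ, satisfying φ'(ξ) = (φ(ξ) − c/4)(φ(ξ) − 3c/4)/(φ(ξ) − c). Then the quantity (φ(ξ) − c/4)^(3/2) · exp(−ξ) / (3c/4 − φ(ξ))^(1/2) is constant in ξ. -/
/-- Along any solution of the kink ODE, the quantity
`(φ − c/4)^{3/2} e^{−ξ} / (3c/4 − φ)^{1/2}` is constant. -/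
theorem stmt11 (c : ℝ) (hc : 0 < c) (φ : ℝ → ℝ)
    (hφ : Differentiable ℝ φ)
    (hbd : ∀ ξ : ℝ, c/4 < φ ξ ∧ φ ξ < 3*c/4)
    (hode : ∀ ξ : ℝ, deriv φ ξ = (φ ξ - c/4) * (φ ξ - 3*c/4) / (φ ξ - c)) :
    ∀ ξ₁ ξ₂ : ℝ,
      (φ ξ₁ - c/4) ^ ((3:ℝ)/2) * Real.exp (-ξ₁) / (3*c/4 - φ ξ₁) ^ ((1:ℝ)/2)
      = (φ ξ₂ - c/4) ^ ((3:ℝ)/2) * Real.exp (-ξ₂) / (3*c/4 - φ ξ₂) ^ ((1:ℝ)/2) := by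
  set F : ℝ → ℝ := fun ξ =>
    (φ ξ - c/4) ^ ((3:ℝ)/2) * Real.exp (-ξ) / (3*c/4 - φ ξ) ^ ((1:ℝ)/2) with hF
  have key : ∀ ξ : ℝ, HasDerivAt F 0 ξ := by
    intro ξ
    obtain ⟨h1, h2⟩ := hbd ξ
    have hu : 0 < φ ξ - c/4 := by linarith
    have hv : 0 < 3*c/4 - φ ξ := by linarith
    have hcφ : φ ξ - c ≠ 0 := by nlinarith
    set p : ℝ := (φ ξ - c/4) * (φ ξ - 3*c/4) / (φ ξ - c) with hp
    have hφd : HasDerivAt φ p ξ := by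
      have := (hφ ξ).hasDerivAt
      rwa [hode ξ] at this
    have hud : HasDerivAt (fun ξ => φ ξ - c/4) p ξ := hφd.sub_const _
    have hvd : HasDerivAt (fun ξ => 3*c/4 - φ ξ) (-p) ξ := (hφd.const_sub _)
    have hN : HasDerivAt (fun ξ => (φ ξ - c/4) ^ ((3:ℝ)/2))
        (p * ((3:ℝ)/2) * (φ ξ - c/4) ^ ((3:ℝ)/2 - 1)) ξ :=
      hud.rpow_const (Or.inl hu.ne')
    have hD : HasDerivAt (fun ξ => (3*c/4 - φ ξ) ^ ((1:ℝ)/2))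
        ((-p) * ((1:ℝ)/2) * (3*c/4 - φ ξ) ^ ((1:ℝ)/2 - 1)) ξ :=
      hvd.rpow_const (Or.inl hv.ne')
    have hE : HasDerivAt (fun ξ : ℝ => Real.exp (-ξ)) (-Real.exp (-ξ)) ξ := by
      simpa [Function.comp_def] using (Real.hasDerivAt_exp (-ξ)).comp ξ (hasDerivAt_neg ξ)
    have hDne : (3*c/4 - φ ξ) ^ ((1:ℝ)/2) ≠ 0 := (Real.rpow_pos_of_pos hv _).ne'
    have H := ((hN.mul hE).div hD hDne)
    have hzero :
        ((p * ((3:ℝ)/2) * (φ ξ - c/4) ^ ((3:ℝ)/2 - 1) * Real.exp (-ξ)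
          + (φ ξ - c/4) ^ ((3:ℝ)/2) * (-Real.exp (-ξ))) * (3*c/4 - φ ξ) ^ ((1:ℝ)/2)
          - (φ ξ - c/4) ^ ((3:ℝ)/2) * Real.exp (-ξ)
            * ((-p) * ((1:ℝ)/2) * (3*c/4 - φ ξ) ^ ((1:ℝ)/2 - 1)))
          / ((3*c/4 - φ ξ) ^ ((1:ℝ)/2)) ^ 2 = 0 := by
      rw [div_eq_zero_iff]; left
      set s : ℝ := (φ ξ - c/4) ^ ((1:ℝ)/2) with hs
      set t : ℝ := (3*c/4 - φ ξ) ^ ((1:ℝ)/2) with ht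
      have hs0 : 0 < s := Real.rpow_pos_of_pos hu _
      have ht0 : 0 < t := Real.rpow_pos_of_pos hv _
      have hss : s * s = φ ξ - c/4 := by
        rw [hs, ← Real.rpow_add hu]; norm_num
      have htt : t * t = 3*c/4 - φ ξ := by
        rw [ht, ← Real.rpow_add hv]; norm_num
      have h32 : (φ ξ - c/4) ^ ((3:ℝ)/2) = (φ ξ - c/4) * s := by
        rw [show ((3:ℝ)/2) = 1 + 1/2 by norm_num, Real.rpow_add hu, Real.rpow_one, hs]
      have h321 : (φ ξ - c/4) ^ ((3:ℝ)/2 - 1) = s := by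
        rw [show ((3:ℝ)/2 - 1) = 1/2 by norm_num, hs]
      have h121 : (3*c/4 - φ ξ) ^ ((1:ℝ)/2 - 1) = 1 / t := by
        rw [show (1:ℝ)/2 - 1 = -(1/2) by norm_num, Real.rpow_neg hv.le, ht]
        simp
      have h3 : φ ξ - 3*c/4 = -(t*t) := by linarith
      have hφc : φ ξ - c = -(s*s + 3*(t*t))/2 := by linarith
      have hne : s*s + 3*(t*t) ≠ 0 := by nlinarith
      have hne2 : -(s*s + 3*(t*t))/2 ≠ 0 := by
        simpa using div_ne_zero (neg_ne_zero.mpr hne) two_ne_zero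
      have hpval : p = 2*(s*s)*(t*t)/(s*s + 3*(t*t)) := by
        rw [hp, hφc, h3, ← hss, div_eq_div_iff hne2 hne]
        ring
      rw [h32, h321, h121, hpval, ← hss]
      field_simp
      ring
    have := hzero ▸ H
    exact this
  intro ξ₁ ξ₂
  exact is_const_of_deriv_eq_zero (fun x => (key x).differentiableAt)
    (fun x => (key x).deriv) ξ₁ ξ₂
end

section
/- Let c > 0 and let φ : ℝ → (c/4, 3c/4) be the kink solution defined implicitly by (φ(ξ) − c/4)^(3/2) = (3c/4 − φ(ξ))^(1/2) e^{ξ}. Define ψ(ξ) = c³/(16(φ(ξ) − c)). Then ψ is strictly decreasing, ψ(ξ) → −c²/12 as ξ → −∞, and ψ(ξ) → −c²/4 as ξ → +∞; i.e., ψ is an antikink. -/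
open Filter Topology

/-- The second component `ψ = c³/(16(φ − c))` along the kink `φ` is an antikink:
strictly decreasing, with limits `−c²/12` at `−∞` and `−c²/4` at `+∞`. -/
theorem stmt13 (c : ℝ) (hc : 0 < c) (φ : ℝ → ℝ)
    (hbd : ∀ ξ : ℝ, φ ξ ∈ Set.Ioo (c/4) (3*c/4))
    (himp : ∀ ξ : ℝ,
      (φ ξ - c/4) ^ ((3:ℝ)/2) = (3*c/4 - φ ξ) ^ ((1:ℝ)/2) * Real.exp ξ)
    (ψ : ℝ → ℝ) (hψ : ∀ ξ : ℝ, ψ ξ = c^3 / (16 * (φ ξ - c))) :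
    StrictAnti ψ ∧
    Tendsto ψ atBot (𝓝 (-(c^2) / 12)) ∧
    Tendsto ψ atTop (𝓝 (-(c^2) / 4)) := by
  have h1 : ∀ ξ, c/4 < φ ξ := fun ξ => (hbd ξ).1
  have h2 : ∀ ξ, φ ξ < 3*c/4 := fun ξ => (hbd ξ).2
  have hlt : ∀ ξ, φ ξ < c := by intro ξ; have := h2 ξ; linarith
  -- φ is strictly monotone
  have hmono : StrictMono φ := by
    intro ξ₁ ξ₂ hξ
    by_contra hcon
    push_neg at hcon
    have hA : (φ ξ₂ - c/4) ^ ((3:ℝ)/2) ≤ (φ ξ₁ - c/4) ^ ((3:ℝ)/2) :=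
      Real.rpow_le_rpow (by have := h1 ξ₂; linarith) (by linarith) (by norm_num)
    rw [himp ξ₁, himp ξ₂] at hA
    have hB : (3*c/4 - φ ξ₁) ^ ((1:ℝ)/2) ≤ (3*c/4 - φ ξ₂) ^ ((1:ℝ)/2) :=
      Real.rpow_le_rpow (by have := h2 ξ₁; linarith) (by linarith) (by norm_num)
    have hBpos : 0 < (3*c/4 - φ ξ₁) ^ ((1:ℝ)/2) :=
      Real.rpow_pos_of_pos (by have := h2 ξ₁; linarith) _
    have hE : Real.exp ξ₁ < Real.exp ξ₂ := Real.exp_lt_exp.2 hξ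
    have hEpos : 0 < Real.exp ξ₁ := Real.exp_pos _
    nlinarith
  -- limit of φ at -∞
  have hφbot : Tendsto φ atBot (𝓝 (c/4)) := by
    have hub : ∀ ξ, φ ξ ≤ c/4 + ((c/2) ^ ((1:ℝ)/2) * Real.exp ξ) ^ ((2:ℝ)/3) := by
      intro ξ
      have ha : (0:ℝ) < φ ξ - c/4 := by have := h1 ξ; linarith
      have key : φ ξ - c/4 = ((φ ξ - c/4) ^ ((3:ℝ)/2)) ^ ((2:ℝ)/3) := by
        rw [← Real.rpow_mul ha.le]
        norm_num
      have hle : (φ ξ - c/4) ^ ((3:ℝ)/2) ≤ (c/2) ^ ((1:ℝ)/2) * Real.exp ξ := by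
        rw [himp ξ]
        have : (3*c/4 - φ ξ) ^ ((1:ℝ)/2) ≤ (c/2) ^ ((1:ℝ)/2) :=
          Real.rpow_le_rpow (by have := h2 ξ; linarith) (by have := h1 ξ; linarith)
            (by norm_num)
        exact mul_le_mul_of_nonneg_right this (Real.exp_pos ξ).le
      have hAnn : 0 ≤ (φ ξ - c/4) ^ ((3:ℝ)/2) := Real.rpow_nonneg ha.le _
      have := Real.rpow_le_rpow hAnn hle (by norm_num : (0:ℝ) ≤ 2/3)
      linarith [key ▸ this]
    have hlim : Tendsto (fun ξ => c/4 + ((c/2) ^ ((1:ℝ)/2) * Real.exp ξ) ^ ((2:ℝ)/3))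
        atBot (𝓝 (c/4)) := by
      have h0 : Tendsto (fun ξ => (c/2) ^ ((1:ℝ)/2) * Real.exp ξ) atBot (𝓝 0) := by
        simpa using tendsto_const_nhds.mul Real.tendsto_exp_atBot
      have hcont : ContinuousAt (fun x : ℝ => x ^ ((2:ℝ)/3)) 0 :=
        Real.continuousAt_rpow_const 0 _ (Or.inr (by norm_num))
      have := (hcont.tendsto.comp h0)
      rw [Real.zero_rpow (by norm_num : ((2:ℝ)/3) ≠ 0)] at this
      simpa using tendsto_const_nhds.add this
    refine tendsto_of_tendsto_of_tendsto_of_le_of_le tendsto_const_nhds hlim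
      (fun ξ => (h1 ξ).le) hub
  -- limit of φ at +∞
  have hφtop : Tendsto φ atTop (𝓝 (3*c/4)) := by
    have hlb : ∀ ξ, 3*c/4 - ((c/2) ^ ((3:ℝ)/2) * Real.exp (-ξ)) ^ 2 ≤ φ ξ := by
      intro ξ
      have hb : (0:ℝ) < 3*c/4 - φ ξ := by have := h2 ξ; linarith
      have key : 3*c/4 - φ ξ = ((3*c/4 - φ ξ) ^ ((1:ℝ)/2)) ^ 2 := by
        rw [← Real.rpow_natCast ((3*c/4 - φ ξ) ^ ((1:ℝ)/2)) 2, ← Real.rpow_mul hb.le]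
        norm_num
      have hsq : (3*c/4 - φ ξ) ^ ((1:ℝ)/2) = (φ ξ - c/4) ^ ((3:ℝ)/2) * Real.exp (-ξ) := by
        rw [himp ξ, mul_assoc, ← Real.exp_add]
        simp
      have hle : (3*c/4 - φ ξ) ^ ((1:ℝ)/2) ≤ (c/2) ^ ((3:ℝ)/2) * Real.exp (-ξ) := by
        rw [hsq]
        refine mul_le_mul_of_nonneg_right ?_ (Real.exp_pos _).le
        exact Real.rpow_le_rpow (by have := h1 ξ; linarith)
          (by have := h2 ξ; linarith) (by norm_num)
      have hnn : 0 ≤ (3*c/4 - φ ξ) ^ ((1:ℝ)/2) := Real.rpow_nonneg hb.le _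
      have := pow_le_pow_left₀ hnn hle 2
      linarith [key ▸ this]
    have hlim : Tendsto (fun ξ => 3*c/4 - ((c/2) ^ ((3:ℝ)/2) * Real.exp (-ξ)) ^ 2)
        atTop (𝓝 (3*c/4)) := by
      have h0 : Tendsto (fun ξ : ℝ => (c/2) ^ ((3:ℝ)/2) * Real.exp (-ξ)) atTop (𝓝 0) := by
        simpa using tendsto_const_nhds.mul (Real.tendsto_exp_atBot.comp tendsto_neg_atTop_atBot)
      have := h0.pow 2
      simpa using tendsto_const_nhds.sub this
    refine tendsto_of_tendsto_of_tendsto_of_le_of_le hlim tendsto_const_nhds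
      hlb (fun ξ => (h2 ξ).le)
  -- ψ as composition
  have hψfun : ψ = (fun x => c^3 / (16 * (x - c))) ∘ φ := funext fun ξ => hψ ξ
  constructor
  · -- strictly decreasing
    intro a b hab
    rw [hψ a, hψ b]
    have hda : 16 * (φ a - c) < 0 := by have := hlt a; linarith
    have hdb : 16 * (φ b - c) < 0 := by have := hlt b; linarith
    have hd : 16 * (φ a - c) < 16 * (φ b - c) := by
      have := hmono hab; linarith
    have := one_div_lt_one_div_of_neg_of_lt hdb hd
    calc c^3 / (16 * (φ b - c)) = c^3 * (1 / (16 * (φ b - c))) := by ring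
      _ < c^3 * (1 / (16 * (φ a - c))) := by
          exact mul_lt_mul_of_pos_left this (pow_pos hc 3)
      _ = c^3 / (16 * (φ a - c)) := by ring
  constructor
  · -- limit at -∞
    have hcont : ContinuousAt (fun x => c^3 / (16 * (x - c))) (c/4) := by
      apply ContinuousAt.div continuousAt_const (by fun_prop)
      intro h
      have : (16:ℝ) * (c/4 - c) = -12 * c := by ring
      rw [this] at h
      have := hc.ne'
      nlinarith [h]
    have := hcont.tendsto.comp hφbot
    rw [← hψfun] at this
    have hne : (16:ℝ) * (c/4 - c) ≠ 0 := by intro h; linarith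
    have hval : c^3 / (16*(c/4 - c)) = -(c^2)/12 := by
      rw [div_eq_div_iff hne (by norm_num)]
      ring
    rw [hval] at this
    exact this
  · -- limit at +∞
    have hcont : ContinuousAt (fun x => c^3 / (16 * (x - c))) (3*c/4) := by
      apply ContinuousAt.div continuousAt_const (by fun_prop)
      intro h
      have : (16:ℝ) * (3*c/4 - c) = -4 * c := by ring
      rw [this] at h
      nlinarith [h]
    have := hcont.tendsto.comp hφtop
    rw [← hψfun] at this
    have hne : (16:ℝ) * (3*c/4 - c) ≠ 0 := by intro h; linarith
    have hval : c^3 / (16*(3*c/4 - c)) = -(c^2)/4 := by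
      rw [div_eq_div_iff hne (by norm_num)]
      ring
    rw [hval] at this
    exact this
end
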